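/- Let (A, E, i, j, ∂) be an unrolled exact couple of bigraded abelian groups. Suppose it is right concentrated, i.e. there exists an integer s₀ such that for all s ≥ s₀ and all n, the map i : A n (s+1) → A n s is an isomorphism. Then the couple converges conditionally if and only if it converges strongly. -/

import Mathlib

/-- An unrolled exact couple of bigraded abelian groups. -/
structure UnrolledExactCouple where
  A : ℤ → ℤ → AddCommGrpCat
  E : ℤ → ℤ → AddCommGrpCat
  i : ∀ n s : ℤ, A n (s + 1) →+ A n s
  j : ∀ n s : ℤ, A n s →+ E n s
  d : ∀ n s : ℤ, E n s →+ A (n - 1) (s + 1)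
  exact_ij : ∀ n s : ℤ, (i n s).range = (j n s).ker
  exact_jd : ∀ n s : ℤ, (j n s).range = (d n s).ker
  exact_di : ∀ n s : ℤ, (d n s).range = (i (n - 1) s).ker

namespace UnrolledExactCouple

variable (C : UnrolledExactCouple)

/-- Transport along an equality of the filtration index. -/
def cast (n : ℤ) {s t : ℤ} (h : s = t) : C.A n s →+ C.A n t := by
  subst h; exact AddMonoidHom.id _

/-- The `r`-fold composite `i^r : A n (s+r) →+ A n s` of the maps `i`. -/
def ipow (n : ℤ) : ∀ (r : ℕ) (s : ℤ), C.A n (s + (r : ℤ)) →+ C.A n s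
  | 0, s => C.cast n (by simp)
  | r + 1, s =>
      ((C.i n s).comp ((ipow n r (s + 1)).comp (C.cast n (by push_cast; ring))))

/-- The transition map `A n t →+ A n s` for `s ≤ t`, a composite of the maps `i`. -/
def tr (n : ℤ) (t s : ℤ) (h : s ≤ t) : C.A n t →+ C.A n s :=
  (C.ipow n (t - s).toNat s).comp
    (C.cast n (by rw [Int.toNat_of_nonneg (by omega : (0:ℤ) ≤ t - s)]; omega))

/-- The colimit `G n` of the direct system `(A n s)` (s decreasing) along the maps `i`. -/
def G (n : ℤ) : Type :=
  AddCommGroup.DirectLimit (fun s : ℤᵒᵈ => C.A n (OrderDual.ofDual s))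
    (fun s t h => C.tr n (OrderDual.ofDual s) (OrderDual.ofDual t) h)

noncomputable instance (n : ℤ) : AddCommGroup (C.G n) := by
  unfold G; infer_instance

/-- The structure map `κ_s : A n s →+ G n`. -/
noncomputable def kappa (n s : ℤ) : C.A n s →+ C.G n :=
  AddCommGroup.DirectLimit.of (fun s : ℤᵒᵈ => C.A n (OrderDual.ofDual s))
    (fun s t h => C.tr n (OrderDual.ofDual s) (OrderDual.ofDual t) h) (OrderDual.toDual s)

/-- The abutment filtration `F^s G n := im κ_s`. -/
noncomputable def F (n s : ℤ) : AddSubgroup (C.G n) :=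
  (C.kappa n s).range

/-- The `r`-cycles `Z_r^{n,s} := ∂⁻¹(im(i^r : A (n-1) (s+1+r) → A (n-1) (s+1)))`. -/
def Z (n s : ℤ) (r : ℕ) : AddSubgroup (C.E n s) :=
  ((C.ipow (n - 1) r (s + 1)).range).comap (C.d n s)

/-- The `r`-boundaries `B_r^{n,s} := j(ker(i^r : A n s → A n (s-r)))`. -/
def B (n s : ℤ) (r : ℕ) : AddSubgroup (C.E n s) :=
  ((C.tr n s (s - (r : ℤ)) (by omega)).ker).map (C.j n s)

/-- The permanent cycles `Z_∞^{n,s} = ⋂_r Z_r^{n,s}`. -/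
def Zinf (n s : ℤ) : AddSubgroup (C.E n s) := ⨅ r : ℕ, C.Z n s r

/-- The infinite boundaries `B_∞^{n,s} = ⋃_r B_r^{n,s}`. -/
def Binf (n s : ℤ) : AddSubgroup (C.E n s) := ⨆ r : ℕ, C.B n s r

/-- Conditional convergence: for every `n` the limit and `lim¹` of the tower
`(A n s)_s` vanish, i.e. the map `(a_s)_s ↦ (a_s - i(a_{s+1}))_s` is bijective. -/
def ConvergesConditionally : Prop :=
  ∀ n : ℤ, Function.Bijective
    (fun (a : ∀ s : ℤ, C.A n s) => fun s : ℤ => a s - C.i n s (a (s + 1)))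

/-- Strong convergence. -/
def ConvergesStrongly : Prop :=
  (∀ n : ℤ,
      (⨅ s : ℤ, C.F n s) = ⊥ ∧
      (∀ b : ℤ → C.G n, (∀ s, b s ∈ C.F n s) →
        ∃ x : ℤ → C.G n, (∀ s, x s ∈ C.F n s) ∧ ∀ s, x s - x (s + 1) = b s)) ∧
    (∀ n s : ℤ, C.Zinf n s = (C.d n s).ker)

end UnrolledExactCouple

namespace UnrolledExactCouple

variable (C : UnrolledExactCouple)

@[simp] lemma cast_rfl (n : ℤ) {s : ℤ} (h : s = s) : C.cast n h = AddMonoidHom.id _ := rfl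

lemma cast_cast (n : ℤ) {s t u : ℤ} (h1 : s = t) (h2 : t = u) :
    (C.cast n h2).comp (C.cast n h1) = C.cast n (h1.trans h2) := by subst h1; subst h2; rfl

lemma cast_cast_apply (n : ℤ) {s t u : ℤ} (h1 : s = t) (h2 : t = u) (x : C.A n s) :
    C.cast n h2 (C.cast n h1 x) = C.cast n (h1.trans h2) x := by subst h1; subst h2; rfl

lemma cast_comp_ipow (n : ℤ) (k : ℕ) {t t' : ℤ} (h : t = t') :
    (C.cast n h).comp (C.ipow n k t) =
      (C.ipow n k t').comp (C.cast n (by rw [h])) := by subst h; rfl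

lemma ipow_congr (n : ℤ) {k k' : ℕ} (h : k = k') (s : ℤ) :
    C.ipow n k s = (C.ipow n k' s).comp (C.cast n (by rw [h])) := by subst h; rfl

lemma ipow_add (n : ℤ) (k₂ k₁ : ℕ) (s : ℤ) :
    C.ipow n (k₂ + k₁) s =
      (C.ipow n k₁ s).comp ((C.ipow n k₂ (s + (k₁ : ℤ))).comp
        (C.cast n (by push_cast; ring))) := by
  induction k₁ generalizing s with
  | zero =>
    show C.ipow n k₂ s = (C.cast n _).comp ((C.ipow n k₂ (s + ((0:ℕ) : ℤ))).comp (C.cast n _))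
    rw [← AddMonoidHom.comp_assoc, cast_comp_ipow C n k₂ (by push_cast; ring : s + ((0:ℕ):ℤ) = s),
      AddMonoidHom.comp_assoc, cast_cast]
    rfl
  | succ m ih =>
    show (C.i n s).comp ((C.ipow n (k₂ + m) (s+1)).comp (C.cast n _)) = _
    rw [ih]
    show (C.i n s).comp (((C.ipow n m (s+1)).comp ((C.ipow n k₂ ((s+1) + (m:ℤ))).comp (C.cast n _))).comp (C.cast n _)) =
      ((C.i n s).comp ((C.ipow n m (s+1)).comp (C.cast n _))).comp ((C.ipow n k₂ (s + ((m+1 : ℕ) : ℤ))).comp (C.cast n _))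
    simp only [AddMonoidHom.comp_assoc]
    congr 2
    rw [← AddMonoidHom.comp_assoc (C.cast n _) (C.ipow n k₂ _) (C.cast n _),
      cast_comp_ipow C n k₂ (by push_cast; ring : s + ((m+1 : ℕ) : ℤ) = (s+1) + (m:ℤ))]
    simp only [AddMonoidHom.comp_assoc]
    rw [cast_cast, cast_cast]

end UnrolledExactCouple
namespace UnrolledExactCouple

variable (C : UnrolledExactCouple)

lemma tr_self (n s : ℤ) (h : s ≤ s) : C.tr n s s h = AddMonoidHom.id _ := by
  unfold tr
  rw [ipow_congr C n (by omega : (s - s).toNat = 0) s]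
  show ((C.cast n _).comp (C.cast n _)).comp (C.cast n _) = _
  rw [cast_cast, cast_cast, cast_rfl]

lemma tr_succ (n s : ℤ) (h : s ≤ s + 1) : C.tr n (s+1) s h = C.i n s := by
  unfold tr
  rw [ipow_congr C n (by omega : (s + 1 - s).toNat = 1) s]
  show (((C.i n s).comp ((C.cast n _).comp (C.cast n _))).comp (C.cast n _)).comp (C.cast n _) = _
  simp only [AddMonoidHom.comp_assoc, cast_cast, cast_rfl, AddMonoidHom.comp_id]

lemma tr_comp (n : ℤ) {u t s : ℤ} (h1 : s ≤ t) (h2 : t ≤ u) :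
    (C.tr n t s h1).comp (C.tr n u t h2) = C.tr n u s (h1.trans h2) := by
  unfold tr
  rw [ipow_congr C n (by omega : (u - s).toNat = (u - t).toNat + (t - s).toNat) s,
    ipow_add]
  show ((C.ipow n _ s).comp (C.cast n _)).comp ((C.ipow n (u-t).toNat t).comp (C.cast n _)) = _
  rw [AddMonoidHom.comp_assoc, ← AddMonoidHom.comp_assoc (C.cast n _) (C.ipow n (u-t).toNat t) _,
    cast_comp_ipow C n _ (by omega : t = s + ((t - s).toNat : ℤ))]
  simp only [AddMonoidHom.comp_assoc, cast_cast]

lemma tr_tr (n : ℤ) {u t s : ℤ} (h1 : s ≤ t) (h2 : t ≤ u) (x : C.A n u) :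
    C.tr n t s h1 (C.tr n u t h2 x) = C.tr n u s (h1.trans h2) x :=
  DFunLike.congr_fun (C.tr_comp n h1 h2) x

lemma i_tr (n : ℤ) {t s : ℤ} (h : s + 1 ≤ t) (x : C.A n t) :
    C.i n s (C.tr n t (s+1) h x) = C.tr n t s (by omega) x := by
  rw [← C.tr_succ n s (by omega), tr_tr]

lemma tr_i (n : ℤ) {t s : ℤ} (h : s ≤ t) (x : C.A n (t+1)) :
    C.tr n t s h (C.i n t x) = C.tr n (t+1) s (by omega) x := by
  rw [← C.tr_succ n t (by omega), tr_tr]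

end UnrolledExactCouple
namespace UnrolledExactCouple

variable (C : UnrolledExactCouple)

/-- If all the maps `i` above `s` are bijective, so are the composite transition maps. -/
lemma tr_bijective (n : ℤ) {t s : ℤ} (h : s ≤ t)
    (hi : ∀ u : ℤ, s ≤ u → Function.Bijective (C.i n u)) :
    Function.Bijective (C.tr n t s h) := by
  have H : ∀ t', s ≤ t' → ∀ h' : s ≤ t', Function.Bijective (C.tr n t' s h') := by
    intro t'
    refine Int.le_induction (motive := fun t' _ => ∀ h' : s ≤ t', Function.Bijective (C.tr n t' s h')) ?_ ?_ t'
    · intro h'; rw [tr_self]; exact Function.bijective_id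
    · intro u hu ih h'
      rw [← C.tr_comp n hu (by omega : u ≤ u + 1), C.tr_succ n u, AddMonoidHom.coe_comp]
      exact Function.Bijective.comp (ih hu) (hi u hu)
  exact H t h h

/-- A family compatible with the maps `i` is determined by its later values. -/
lemma compat_eq_tr (n : ℤ) (f : ∀ s : ℤ, C.A n s)
    (hf : ∀ s, f s = C.i n s (f (s+1))) {t s : ℤ} (h : s ≤ t) :
    f s = C.tr n t s h (f t) := by
  have H : ∀ t', s ≤ t' → ∀ h' : s ≤ t', f s = C.tr n t' s h' (f t') := by
    intro t'
    refine Int.le_induction (motive := fun t' _ => ∀ h' : s ≤ t', f s = C.tr n t' s h' (f t')) ?_ ?_ t'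
    · intro h'; rw [tr_self]; rfl
    · intro u hu ih h'
      rw [ih hu, hf u, tr_i]
  exact H t h h

lemma kappa_tr (n : ℤ) {t s : ℤ} (h : s ≤ t) (x : C.A n t) :
    C.kappa n s (C.tr n t s h x) = C.kappa n t x := by
  unfold kappa
  exact AddCommGroup.DirectLimit.of_f
    (G := fun s : ℤᵒᵈ => C.A n (OrderDual.ofDual s))
    (f := fun s t h => C.tr n (OrderDual.ofDual s) (OrderDual.ofDual t) h)
    (i := OrderDual.toDual t) (j := OrderDual.toDual s) h x

lemma F_mono (n : ℤ) {t s : ℤ} (h : s ≤ t) : C.F n t ≤ C.F n s := by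
  rintro x ⟨a, rfl⟩
  exact ⟨C.tr n t s h a, C.kappa_tr n h a⟩

/-- Transport along an equality of the first index. -/
def ncast {n n' : ℤ} (h : n = n') (s : ℤ) : C.A n s →+ C.A n' s := by
  subst h; exact AddMonoidHom.id _

lemma ncast_injective {n n' : ℤ} (h : n = n') (s : ℤ) : Function.Injective (C.ncast h s) := by
  subst h; exact fun a b hab => hab

lemma i_ncast {n n' : ℤ} (h : n = n') (s : ℤ) (x : C.A n (s+1)) :
    C.i n' s (C.ncast h (s+1) x) = C.ncast h s (C.i n s x) := by subst h; rfl

lemma ncast_ipow {n n' : ℤ} (h : n = n') (r : ℕ) (s : ℤ) (x : C.A n (s + (r:ℤ))) :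
    C.ncast h s (C.ipow n r s x) = C.ipow n' r s (C.ncast h (s + (r:ℤ)) x) := by subst h; rfl

/-- Exactness `im ∂ = ker i`, elementwise, with the index on the `i` side. -/
lemma exists_d_eq (m t : ℤ) (c : C.A (m - 1) (t + 1)) (hc : C.i (m-1) t c = 0) :
    ∃ x : C.E m t, C.d m t x = c := by
  have h1 : c ∈ (C.i (m-1) t).ker := hc
  rw [← C.exact_di m t] at h1
  exact h1

/-- `tr` factors through `ipow`, so the ranges agree. -/
lemma mem_range_ipow_of_tr {n : ℤ} {v u : ℤ} (h : v ≤ u) (r : ℕ) (hr : u = v + (r:ℤ))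
    {c : C.A n v} (hc : ∃ y : C.A n u, C.tr n u v h y = c) :
    c ∈ (C.ipow n r v).range := by
  obtain ⟨y, rfl⟩ := hc
  unfold tr
  rw [ipow_congr C n (by omega : (u - v).toNat = r) v]
  exact ⟨_, rfl⟩

end UnrolledExactCouple
namespace UnrolledExactCouple

variable (C : UnrolledExactCouple)

lemma cast_tr (n : ℤ) {u v v' : ℤ} (h : v = v') (hv : v ≤ u) (x : C.A n u) :
    C.cast n h (C.tr n u v hv x) = C.tr n u v' (h ▸ hv) x := by subst h; rfl

lemma cast_injective (n : ℤ) {s t : ℤ} (h : s = t) : Function.Injective (C.cast n h) := by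
  subst h; exact fun a b hab => hab

/-- Conditional convergence implies that the groups `A n s` vanish for `s ≥ s₀`. -/
lemma cond_to_vanish {s₀ : ℤ} (hi : ∀ s : ℤ, s₀ ≤ s → ∀ n : ℤ, Function.Bijective (C.i n s))
    (hc : C.ConvergesConditionally) :
    ∀ n s : ℤ, s₀ ≤ s → ∀ a : C.A n s, a = 0 := by
  intro n s hs a
  have hbij : ∀ t : ℤ, (h : s ≤ t) → Function.Bijective (C.tr n t s h) :=
    fun t h => C.tr_bijective n h (fun u hu => hi u (by omega) n)
  set f : ∀ t : ℤ, C.A n t := fun t =>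
    if htle : t ≤ s then C.tr n s t htle a
    else Function.surjInv (hbij t (by omega)).surjective a with hfdef
  have hcomp : ∀ t : ℤ, f t = C.i n t (f (t+1)) := by
    intro t
    rcases le_or_gt (t+1) s with h1 | h1
    · rw [hfdef]
      simp only [dif_pos (show t ≤ s by omega), dif_pos h1]
      rw [i_tr]
    · rcases le_or_gt t s with h2 | h2
      · have ht : t = s := by omega
        subst ht
        rw [hfdef]
        simp only [dif_pos le_rfl, dif_neg (show ¬ t + 1 ≤ t by omega)]
        have h3 := Function.surjInv_eq (hbij (t+1) (by omega)).surjective a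
        have e1 : C.tr n t t le_rfl a = a := DFunLike.congr_fun (C.tr_self n t le_rfl) a
        have e2 : C.i n t (Function.surjInv (hbij (t+1) (by omega)).surjective a) = a :=
          (DFunLike.congr_fun (C.tr_succ n t (by omega)) _).symm.trans h3
        exact e1.trans e2.symm
      · apply (hbij t (by omega)).injective
        rw [hfdef]
        simp only [dif_neg (show ¬ t ≤ s by omega), dif_neg (show ¬ t + 1 ≤ s by omega)]
        rw [tr_i]
        exact (Function.surjInv_eq (hbij t (by omega)).surjective a).trans
          ((Function.surjInv_eq (hbij (t+1) (by omega)).surjective a).symm)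
  have hker : (fun t : ℤ => f t - C.i n t (f (t+1))) =
      (fun t : ℤ => (0 : C.A n t) - C.i n t (0 : C.A n (t+1))) := by
    funext t
    rw [← hcomp t, sub_self, map_zero, sub_zero]
  have hf0 : f = (fun t : ℤ => (0 : C.A n t)) := (hc n).injective hker
  have : f s = a := by rw [hfdef]; simp only [dif_pos le_rfl]; rw [tr_self]; rfl
  rw [← this, hf0]

/-- Vanishing of `A n s` for `s ≥ s₀` implies conditional convergence. -/
lemma vanish_to_cond {s₀ : ℤ}
    (V : ∀ n s : ℤ, s₀ ≤ s → ∀ a : C.A n s, a = 0) :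
    C.ConvergesConditionally := by
  intro n
  constructor
  · intro f₁ f₂ hf
    have hp : ∀ t : ℤ, f₁ t - f₂ t = C.i n t (f₁ (t+1) - f₂ (t+1)) := by
      intro t
      have h1 : f₁ t - C.i n t (f₁ (t+1)) = f₂ t - C.i n t (f₂ (t+1)) := congrFun hf t
      rw [map_sub, sub_eq_sub_iff_sub_eq_sub]
      exact h1
    have hz : ∀ t : ℤ, f₁ t - f₂ t = 0 := by
      intro t
      have h2 := C.compat_eq_tr n (fun t => f₁ t - f₂ t) hp (le_max_left t s₀)
      rw [h2, V n (max t s₀) (le_max_right t s₀) (f₁ (max t s₀) - f₂ (max t s₀)), map_zero]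
    funext t
    have := hz t
    rw [sub_eq_zero] at this
    exact this
  · intro b
    set Fn : ∀ s t : ℤ, C.A n s := fun s t =>
      if h : s ≤ t then C.tr n t s h (b t) else 0 with hFdef
    refine ⟨fun s => ∑ t ∈ Finset.Icc s (s₀ - 1), Fn s t, ?_⟩
    funext s
    have hstep : C.i n s (∑ t ∈ Finset.Icc (s+1) (s₀ - 1), Fn (s+1) t) =
        ∑ t ∈ Finset.Icc (s+1) (s₀ - 1), Fn s t := by
      rw [map_sum]
      refine Finset.sum_congr rfl (fun t ht => ?_)
      rw [Finset.mem_Icc] at ht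
      rw [hFdef]
      simp only [dif_pos (show s + 1 ≤ t by omega), dif_pos (show s ≤ t by omega)]
      rw [i_tr]
    simp only
    rw [hstep]
    rcases le_or_gt s (s₀ - 1) with hcase | hcase
    · have hins : Finset.Icc s (s₀ - 1) = insert s (Finset.Icc (s+1) (s₀-1)) := by
        ext u; simp only [Finset.mem_Icc, Finset.mem_insert]; omega
      rw [hins, Finset.sum_insert (by simp only [Finset.mem_Icc]; omega)]
      rw [add_sub_cancel_right, hFdef]
      simp only [dif_pos le_rfl]
      rw [tr_self]
      rfl
    · rw [Finset.Icc_eq_empty (by omega), Finset.Icc_eq_empty (by omega)]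
      simp only [Finset.sum_empty, sub_zero]
      exact (V n s (by omega) (b s)).symm

end UnrolledExactCouple
namespace UnrolledExactCouple

variable (C : UnrolledExactCouple)

lemma F_eq_bot {s₀ : ℤ} (V : ∀ n s : ℤ, s₀ ≤ s → ∀ a : C.A n s, a = 0)
    (n s : ℤ) (hs : s₀ ≤ s) : C.F n s = ⊥ := by
  rw [eq_bot_iff]
  rintro x ⟨a, rfl⟩
  rw [V n s hs a, map_zero]
  exact AddSubgroup.zero_mem _

lemma vanish_to_strong {s₀ : ℤ} (V : ∀ n s : ℤ, s₀ ≤ s → ∀ a : C.A n s, a = 0) :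
    C.ConvergesStrongly := by
  constructor
  · intro n
    constructor
    · rw [eq_bot_iff]
      exact le_trans (iInf_le _ s₀) (le_of_eq (C.F_eq_bot V n s₀ le_rfl))
    · intro b hb
      have hb0 : ∀ s : ℤ, s₀ ≤ s → b s = 0 := by
        intro s hs
        have := hb s
        rw [C.F_eq_bot V n s hs, AddSubgroup.mem_bot] at this
        exact this
      refine ⟨fun s => ∑ t ∈ Finset.Icc s (s₀ - 1), b t, ?_, ?_⟩
      · intro s
        refine AddSubgroup.sum_mem _ (fun t ht => ?_)
        rw [Finset.mem_Icc] at ht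
        exact C.F_mono n (show s ≤ t by omega) (hb t)
      · intro s
        show (∑ t ∈ Finset.Icc s (s₀ - 1), b t) - (∑ t ∈ Finset.Icc (s+1) (s₀ - 1), b t) = b s
        rcases le_or_gt s (s₀ - 1) with hcase | hcase
        · have hins : Finset.Icc s (s₀ - 1) = insert s (Finset.Icc (s+1) (s₀-1)) := by
            ext u; simp only [Finset.mem_Icc, Finset.mem_insert]; omega
          rw [hins, Finset.sum_insert (by simp only [Finset.mem_Icc]; omega),
            add_sub_cancel_right]
        · rw [Finset.Icc_eq_empty (by omega), Finset.Icc_eq_empty (by omega)]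
          rw [Finset.sum_empty, sub_zero]
          exact (hb0 s (by omega)).symm
  · intro n s
    apply le_antisymm
    · intro x hx
      have hx' : x ∈ ⨅ r : ℕ, C.Z n s r := hx
      have hr := (AddSubgroup.mem_iInf.mp hx') (s₀ - (s+1)).toNat
      have hr' : C.d n s x ∈ (C.ipow (n-1) (s₀ - (s+1)).toNat (s+1)).range := hr
      obtain ⟨y, hy⟩ := hr'
      have hy0 : y = 0 := V (n-1) _ (by omega) y
      rw [hy0, map_zero] at hy
      exact AddMonoidHom.mem_ker.mpr hy.symm
    · intro x hx
      show x ∈ ⨅ r : ℕ, C.Z n s r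
      rw [AddSubgroup.mem_iInf]
      intro r
      have hx0 : C.d n s x = 0 := hx
      show C.d n s x ∈ (C.ipow (n-1) r (s+1)).range
      rw [hx0]
      exact AddSubgroup.zero_mem _

end UnrolledExactCouple
namespace UnrolledExactCouple

variable (C : UnrolledExactCouple)

lemma strong_to_vanish {s₀ : ℤ} (hi : ∀ s : ℤ, s₀ ≤ s → ∀ n : ℤ, Function.Bijective (C.i n s))
    (hst : C.ConvergesStrongly) :
    ∀ n s : ℤ, s₀ ≤ s → ∀ a : C.A n s, a = 0 := by
  intro n s hs a
  have hbij : ∀ (v u : ℤ), s₀ ≤ v → (h : v ≤ u) → Function.Bijective (C.tr n u v h) :=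
    fun v u hv h => C.tr_bijective n h (fun w hw => hi w (by omega) n)
  -- Step 1: κ_s a = 0.
  have h1 : C.kappa n s a ∈ ⨅ t : ℤ, C.F n t := by
    rw [AddSubgroup.mem_iInf]
    intro t
    rcases le_total t s with h2 | h2
    · exact C.F_mono n h2 ⟨a, rfl⟩
    · obtain ⟨a', ha'⟩ := (hbij s t hs h2).surjective a
      exact ⟨a', by rw [← ha', C.kappa_tr n h2 a']⟩
  rw [(hst.1 n).1, AddSubgroup.mem_bot] at h1
  -- Step 2: a dies at a finite stage.
  haveI hds : DirectedSystem (fun s : ℤᵒᵈ => C.A n (OrderDual.ofDual s))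
      (fun s t h => C.tr n (OrderDual.ofDual s) (OrderDual.ofDual t) h) := by
    constructor
    · intro i x
      exact DFunLike.congr_fun (C.tr_self n _ le_rfl) x
    · intro k j i hij hjk x
      exact C.tr_tr n hjk hij x
  obtain ⟨u, hu, hu0⟩ := AddCommGroup.DirectLimit.of.zero_exact
    (G := fun s : ℤᵒᵈ => C.A n (OrderDual.ofDual s))
    (f := fun s t h => C.tr n (OrderDual.ofDual s) (OrderDual.ofDual t) h)
    (OrderDual.toDual s) a h1
  have hu' : (OrderDual.ofDual u) ≤ s := hu
  have hu0' : C.tr n s (OrderDual.ofDual u) hu' a = 0 := hu0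
  -- Step 3: climb back up using `Zinf = ker ∂`.
  have main : ∀ t : ℤ, t ≤ s → ∀ h : t ≤ s, C.tr n s t h a = 0 → a = 0 := by
    intro t
    refine Int.le_induction_down
      (motive := fun t _ => ∀ h : t ≤ s, C.tr n s t h a = 0 → a = 0) ?_ ?_ t
    · intro h h0
      rw [C.tr_self n s h] at h0
      exact h0
    · intro t ht ih h h0
      -- h : t - 1 ≤ s, h0 : tr n s (t-1) a = 0; show a = 0 via ih : tr n s t a = 0 → a = 0
      have hts : t ≤ s := ht
      set v : ℤ := (t - 1) + 1 with hv
      have hvs : v ≤ s := by omega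
      set c : C.A n v := C.tr n s v hvs a with hc
      have hic : C.i n (t-1) c = 0 := by
        rw [hc, i_tr]
        exact h0
      -- move to the (n+1)-page
      have hic' : C.i ((n+1)-1) (t-1) (C.ncast (by ring) v c) = 0 := by
        rw [C.i_ncast (by ring : n = (n+1)-1) (t-1) c, hic, map_zero]
      obtain ⟨x, hx⟩ := C.exists_d_eq (n+1) (t-1) (C.ncast (by ring) v c) hic'
      have hxZ : x ∈ C.Zinf (n+1) (t-1) := by
        show x ∈ ⨅ r : ℕ, C.Z (n+1) (t-1) r
        rw [AddSubgroup.mem_iInf]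
        intro r
        show C.d (n+1) (t-1) x ∈ (C.ipow ((n+1)-1) r ((t-1)+1)).range
        rw [hx]
        -- c is in the range of `ipow n r v`
        have hcr : c ∈ (C.ipow n r v).range := by
          rcases le_total (v + (r:ℤ)) s with hcase | hcase
          · refine C.mem_range_ipow_of_tr (by omega) r rfl ⟨C.tr n s (v + (r:ℤ)) hcase a, ?_⟩
            rw [tr_tr]
          · obtain ⟨a', ha'⟩ := (hbij s (v + (r:ℤ)) hs hcase).surjective a
            refine C.mem_range_ipow_of_tr (by omega) r rfl ⟨a', ?_⟩
            rw [hc, ← ha', tr_tr]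
        obtain ⟨y, hy⟩ := hcr
        exact ⟨C.ncast (by ring) _ y, by rw [← C.ncast_ipow (by ring : n = (n+1)-1) r v y, hy]⟩
      rw [hst.2 (n+1) (t-1)] at hxZ
      have hc0 : C.ncast (by ring : n = (n+1)-1) v c = 0 := by
        rw [← hx]; exact hxZ
      have hc1 : c = 0 := by
        apply C.ncast_injective (by ring : n = (n+1)-1) v
        rw [hc0, map_zero]
      apply ih hts
      apply C.cast_injective n (by omega : t = (t-1)+1)
      rw [C.cast_tr n (by omega : t = (t-1)+1) hts a]
      rw [map_zero]
      exact hc1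
  exact main (OrderDual.ofDual u) hu' hu' hu0'

end UnrolledExactCouple
/-- **Boardman, Theorem 6.1.**  For a right-concentrated unrolled exact couple (the maps
`i : A n (s+1) → A n s` are isomorphisms for all large `s`), conditional convergence is
equivalent to strong convergence. -/
theorem UnrolledExactCouple.rightConcentrated_conditionally_iff_strongly
    (C : UnrolledExactCouple)
    (h : ∃ s₀ : ℤ, ∀ s : ℤ, s₀ ≤ s → ∀ n : ℤ, Function.Bijective (C.i n s)) :
    C.ConvergesConditionally ↔ C.ConvergesStrongly := by
  obtain ⟨s₀, hi⟩ := h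
  constructor
  · intro hc
    exact C.vanish_to_strong (C.cond_to_vanish hi hc)
  · intro hs
    exact C.vanish_to_cond (C.strong_to_vanish hi hs)
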